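/- The number of PGL_3(F_q)-orbits of ordered quintuples of points in P^2(F_q) in general position (no three collinear) equals q^2 - 5q + 6. -/

import Mathlib

open Projectivization
open scoped LinearAlgebra.Projectivization

/-- The projective plane over `F`. -/
abbrev PP (F : Type) [Field F] := ℙ F (Fin 3 → F)

/-- Three points of the projective plane are collinear if their representative lines all
lie in a common subspace of dimension at most 2. -/
def Collin (F : Type) [Field F] (a b c : PP F) : Prop :=
  ∃ W : Submodule F (Fin 3 → F), Module.finrank F W ≤ 2 ∧
    a.submodule ≤ W ∧ b.submodule ≤ W ∧ c.submodule ≤ W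

/-- A tuple of points of the projective plane is in general position if no three of
them are collinear. -/
def GenPos (F : Type) [Field F] {n : ℕ} (P : Fin n → PP F) : Prop :=
  ∀ i j k : Fin n, i ≠ j → i ≠ k → j ≠ k → ¬ Collin F (P i) (P j) (P k)

/-- The action of `GL_3(F)` on the projective plane (inducing the `PGL_3(F)`-action). -/
noncomputable def glAct (F : Type) [Field F] (g : GL (Fin 3) F) (x : PP F) : PP F :=
  Projectivization.map
    ((Matrix.GeneralLinearGroup.toLin g).toLinearEquiv : (Fin 3 → F) →ₗ[F] (Fin 3 → F))
    (Matrix.GeneralLinearGroup.toLin g).toLinearEquiv.injective x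

/-- The standard frame `[1:0:0], [0:1:0], [0:0:1], [1:1:1]`. -/
noncomputable def frame (F : Type) [Field F] : Fin 4 → PP F :=
  ![Projectivization.mk F ![1,0,0] (by intro h; have := congrFun h 0; simp at this),
    Projectivization.mk F ![0,1,0] (by intro h; have := congrFun h 1; simp at this),
    Projectivization.mk F ![0,0,1] (by intro h; have := congrFun h 2; simp at this),
    Projectivization.mk F ![1,1,1] (by intro h; have := congrFun h 0; simp at this)]



section Aux
open Matrix
set_option linter.unreachableTactic false
variable {F : Type} [Field F]

lemma mulVec_ne_zero (g : GL (Fin 3) F) {v : Fin 3 → F} (hv : v ≠ 0) :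
    (g : Matrix (Fin 3) (Fin 3) F) *ᵥ v ≠ 0 := by
  intro h
  apply hv
  have h2 := congrArg (fun w => ((g⁻¹ : GL (Fin 3) F) : Matrix (Fin 3) (Fin 3) F) *ᵥ w) h
  simp only [Matrix.mulVec_mulVec, Matrix.mulVec_zero] at h2
  rwa [Matrix.coe_units_inv, Matrix.nonsing_inv_mul _ ((Matrix.isUnit_iff_isUnit_det _).mp g.isUnit), Matrix.one_mulVec] at h2

lemma glAct_mk (g : GL (Fin 3) F) (v : Fin 3 → F) (hv : v ≠ 0) :
    glAct F g (Projectivization.mk F v hv) =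
      Projectivization.mk F ((g : Matrix (Fin 3) (Fin 3) F) *ᵥ v) (mulVec_ne_zero g hv) := by
  rw [glAct, Projectivization.map_mk]
  congr 1

-- Collin in terms of linear independence
lemma collin_iff_mk {v w u : Fin 3 → F} (hv : v ≠ 0) (hw : w ≠ 0) (hu : u ≠ 0) :
    Collin F (Projectivization.mk F v hv) (Projectivization.mk F w hw)
      (Projectivization.mk F u hu) ↔ ¬ LinearIndependent F ![v, w, u] := by
  constructor
  · rintro ⟨W, hW, h1, h2, h3⟩ hind
    have hsub : Submodule.span F (Set.range ![v, w, u]) ≤ W := by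
      rw [Submodule.span_le]
      rintro x ⟨i, rfl⟩
      fin_cases i
      · exact h1 (by rw [Projectivization.submodule_mk]; exact Submodule.mem_span_singleton_self v)
      · exact h2 (by rw [Projectivization.submodule_mk]; exact Submodule.mem_span_singleton_self w)
      · exact h3 (by rw [Projectivization.submodule_mk]; exact Submodule.mem_span_singleton_self u)
    have h4 : (Set.range ![v, w, u]).finrank F ≤ Module.finrank F W :=
      Submodule.finrank_mono hsub
    rw [← linearIndependent_iff_card_eq_finrank_span.mp hind] at h4
    simp at h4
    omega
  · intro hind
    refine ⟨Submodule.span F (Set.range ![v, w, u]), ?_, ?_, ?_, ?_⟩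
    · rcases Nat.lt_or_ge (Module.finrank F (Submodule.span F (Set.range ![v, w, u]))) 3 with h | h
      · omega
      · exfalso
        apply hind
        rw [linearIndependent_iff_card_eq_finrank_span]
        have hle : Module.finrank F (Submodule.span F (Set.range ![v, w, u])) ≤ 3 := by
          have h5 := finrank_range_le_card (R := F) ![v, w, u]
          rw [Fintype.card_fin] at h5
          exact h5
        show (3 : ℕ) = Module.finrank F (Submodule.span F (Set.range ![v, w, u]))
        omega
    all_goals
      rw [Projectivization.submodule_mk, Submodule.span_singleton_le_iff_mem]
      apply Submodule.subset_span
    · exact ⟨0, rfl⟩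
    · exact ⟨1, rfl⟩
    · exact ⟨2, rfl⟩

lemma linIndep_iff_det (v w u : Fin 3 → F) :
    LinearIndependent F ![v, w, u] ↔ (Matrix.of ![v, w, u]).det ≠ 0 := by
  have h := Matrix.linearIndependent_rows_iff_isUnit (K := F) (A := Matrix.of ![v, w, u])
  rw [Matrix.isUnit_iff_isUnit_det, isUnit_iff_ne_zero] at h
  exact h

lemma collin_iff_det {v w u : Fin 3 → F} (hv : v ≠ 0) (hw : w ≠ 0) (hu : u ≠ 0) :
    Collin F (Projectivization.mk F v hv) (Projectivization.mk F w hw)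
      (Projectivization.mk F u hu) ↔ (Matrix.of ![v, w, u]).det = 0 := by
  rw [collin_iff_mk, linIndep_iff_det, not_not]

lemma rows_mulVec_eq (g : Matrix (Fin 3) (Fin 3) F) (v w u : Fin 3 → F) :
    Matrix.of ![g *ᵥ v, g *ᵥ w, g *ᵥ u] = Matrix.of ![v, w, u] * gᵀ := by
  ext i j
  fin_cases i <;>
    simp [Matrix.mul_apply, Matrix.mulVec, dotProduct, mul_comm]

lemma collin_glAct (g : GL (Fin 3) F) (a b c : PP F) :
    Collin F (glAct F g a) (glAct F g b) (glAct F g c) ↔ Collin F a b c := by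
  conv_rhs => rw [← a.mk_rep, ← b.mk_rep, ← c.mk_rep]
  conv_lhs => rw [← a.mk_rep, ← b.mk_rep, ← c.mk_rep]
  rw [glAct_mk, glAct_mk, glAct_mk, collin_iff_det, collin_iff_det, rows_mulVec_eq,
    Matrix.det_mul, Matrix.det_transpose]
  have hg : (g : Matrix (Fin 3) (Fin 3) F).det ≠ 0 := by
    rw [← isUnit_iff_ne_zero, ← Matrix.isUnit_iff_isUnit_det]
    exact g.isUnit
  constructor
  · intro h
    rcases mul_eq_zero.mp h with h | h
    · exact h
    · exact absurd h hg
  · intro h; rw [h, zero_mul]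

lemma nz3 {v : Fin 3 → F} (i : Fin 3) (h : v i ≠ 0) : v ≠ 0 :=
  fun hv => h (by rw [hv]; rfl)

lemma glAct_glAct (g h : GL (Fin 3) F) (x : PP F) :
    glAct F g (glAct F h x) = glAct F (g * h) x := by
  rw [← x.mk_rep, glAct_mk, glAct_mk, glAct_mk]
  have hv : (↑g : Matrix (Fin 3) (Fin 3) F) *ᵥ ((↑h : Matrix (Fin 3) (Fin 3) F) *ᵥ x.rep)
      = (↑(g * h) : Matrix (Fin 3) (Fin 3) F) *ᵥ x.rep := by
    rw [Matrix.mulVec_mulVec]; rfl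
  simp only [hv]

lemma glAct_scalar (g : GL (Fin 3) F) (d : Fˣ)
    (hg : (↑g : Matrix (Fin 3) (Fin 3) F) = (d : F) • (1 : Matrix (Fin 3) (Fin 3) F))
    (x : PP F) : glAct F g x = x := by
  conv_lhs => rw [← x.mk_rep]
  rw [glAct_mk]
  conv_rhs => rw [← x.mk_rep]
  rw [Projectivization.mk_eq_mk_iff]
  refine ⟨d, ?_⟩
  rw [hg, Matrix.smul_mulVec, Matrix.one_mulVec]
  simp [Units.smul_def]

lemma mulVec3 (M : Matrix (Fin 3) (Fin 3) F) (v : Fin 3 → F) (j : Fin 3) :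
    (M *ᵥ v) j = M j 0 * v 0 + M j 1 * v 1 + M j 2 * v 2 := by
  simp [Matrix.mulVec, dotProduct, Fin.sum_univ_three]

lemma fix_frame_scalar (g : GL (Fin 3) F) (hg : ∀ i, glAct F g (frame F i) = frame F i) :
    ∃ d : Fˣ, (↑g : Matrix (Fin 3) (Fin 3) F) = (d : F) • (1 : Matrix (Fin 3) (Fin 3) F) := by
  have MM : ∀ j k : Fin 3, (↑g : Matrix (Fin 3) (Fin 3) F) j k = (↑g : Matrix (Fin 3) (Fin 3) F) j k := fun _ _ => rfl
  have h0 := hg 0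
  have h1 := hg 1
  have h2 := hg 2
  have h3 := hg 3
  rw [show frame F 0 = Projectivization.mk F ![1,0,0] (nz3 0 one_ne_zero) from rfl,
    glAct_mk, Projectivization.mk_eq_mk_iff] at h0
  rw [show frame F 1 = Projectivization.mk F ![0,1,0] (nz3 1 one_ne_zero) from rfl,
    glAct_mk, Projectivization.mk_eq_mk_iff] at h1
  rw [show frame F 2 = Projectivization.mk F ![0,0,1] (nz3 2 one_ne_zero) from rfl,
    glAct_mk, Projectivization.mk_eq_mk_iff] at h2
  rw [show frame F 3 = Projectivization.mk F ![1,1,1] (nz3 0 one_ne_zero) from rfl,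
    glAct_mk, Projectivization.mk_eq_mk_iff] at h3
  obtain ⟨a, ha⟩ := h0
  obtain ⟨b, hb⟩ := h1
  obtain ⟨c, hc⟩ := h2
  obtain ⟨d, hd⟩ := h3
  have e00 : (↑g : Matrix (Fin 3) (Fin 3) F) 0 0 = (a : F) := by
    have h := congrFun ha 0; rw [mulVec3] at h; simp [Units.smul_def] at h; first | exact h.symm | exact h | linear_combination -h | linear_combination h
  have e10 : (↑g : Matrix (Fin 3) (Fin 3) F) 1 0 = 0 := by
    have h := congrFun ha 1; rw [mulVec3] at h; simp [Units.smul_def] at h; first | exact h.symm | exact h | linear_combination -h | linear_combination h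
  have e20 : (↑g : Matrix (Fin 3) (Fin 3) F) 2 0 = 0 := by
    have h := congrFun ha 2; rw [mulVec3] at h; simp [Units.smul_def] at h; first | exact h.symm | exact h | linear_combination -h | linear_combination h
  have e01 : (↑g : Matrix (Fin 3) (Fin 3) F) 0 1 = 0 := by
    have h := congrFun hb 0; rw [mulVec3] at h; simp [Units.smul_def] at h; first | exact h.symm | exact h | linear_combination -h | linear_combination h
  have e11 : (↑g : Matrix (Fin 3) (Fin 3) F) 1 1 = (b : F) := by
    have h := congrFun hb 1; rw [mulVec3] at h; simp [Units.smul_def] at h; first | exact h.symm | exact h | linear_combination -h | linear_combination h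
  have e21 : (↑g : Matrix (Fin 3) (Fin 3) F) 2 1 = 0 := by
    have h := congrFun hb 2; rw [mulVec3] at h; simp [Units.smul_def] at h; first | exact h.symm | exact h | linear_combination -h | linear_combination h
  have e02 : (↑g : Matrix (Fin 3) (Fin 3) F) 0 2 = 0 := by
    have h := congrFun hc 0; rw [mulVec3] at h; simp [Units.smul_def] at h; first | exact h.symm | exact h | linear_combination -h | linear_combination h
  have e12 : (↑g : Matrix (Fin 3) (Fin 3) F) 1 2 = 0 := by
    have h := congrFun hc 1; rw [mulVec3] at h; simp [Units.smul_def] at h; first | exact h.symm | exact h | linear_combination -h | linear_combination h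
  have e22 : (↑g : Matrix (Fin 3) (Fin 3) F) 2 2 = (c : F) := by
    have h := congrFun hc 2; rw [mulVec3] at h; simp [Units.smul_def] at h; first | exact h.symm | exact h | linear_combination -h | linear_combination h
  have s0 : (↑g : Matrix (Fin 3) (Fin 3) F) 0 0 + (↑g : Matrix (Fin 3) (Fin 3) F) 0 1 + (↑g : Matrix (Fin 3) (Fin 3) F) 0 2 = (d : F) := by
    have h := congrFun hd 0; rw [mulVec3] at h; simp [Units.smul_def] at h; first | exact h.symm | exact h | linear_combination -h | linear_combination h
  have s1 : (↑g : Matrix (Fin 3) (Fin 3) F) 1 0 + (↑g : Matrix (Fin 3) (Fin 3) F) 1 1 + (↑g : Matrix (Fin 3) (Fin 3) F) 1 2 = (d : F) := by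
    have h := congrFun hd 1; rw [mulVec3] at h; simp [Units.smul_def] at h; first | exact h.symm | exact h | linear_combination -h | linear_combination h
  have s2 : (↑g : Matrix (Fin 3) (Fin 3) F) 2 0 + (↑g : Matrix (Fin 3) (Fin 3) F) 2 1 + (↑g : Matrix (Fin 3) (Fin 3) F) 2 2 = (d : F) := by
    have h := congrFun hd 2; rw [mulVec3] at h; simp [Units.smul_def] at h; first | exact h.symm | exact h | linear_combination -h | linear_combination h
  refine ⟨d, ?_⟩
  ext j k
  fin_cases j <;> fin_cases k <;> simp [Matrix.one_apply]
  · linear_combination s0 - e01 - e02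
  · exact e01
  · exact e02
  · exact e10
  · linear_combination s1 - e10 - e12
  · exact e12
  · exact e20
  · exact e21
  · linear_combination s2 - e20 - e21

lemma collin_comm12 (a b c : PP F) : Collin F a b c ↔ Collin F b a c := by
  unfold Collin; tauto

lemma collin_comm23 (a b c : PP F) : Collin F a b c ↔ Collin F a c b := by
  unfold Collin; tauto

lemma genPos_of_sorted {n : ℕ} (P : Fin n → PP F)
    (h : ∀ i j k : Fin n, i < j → j < k → ¬ Collin F (P i) (P j) (P k)) : GenPos F P := by
  intro i j k hij hik hjk
  rw [← Fin.val_ne_iff] at hij hik hjk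
  rcases Nat.lt_or_ge i.val j.val with h1 | h1 <;>
    rcases Nat.lt_or_ge i.val k.val with h2 | h2 <;>
      rcases Nat.lt_or_ge j.val k.val with h3 | h3 <;>
        [skip; skip; skip; skip; skip; skip; skip; skip] <;>
  · first
    | (exact h i j k (by omega) (by omega))
    | (rw [collin_comm23]; exact h i k j (by omega) (by omega))
    | (rw [collin_comm12]; exact h j i k (by omega) (by omega))
    | (rw [collin_comm12, collin_comm23]; exact h j k i (by omega) (by omega))
    | (rw [collin_comm23, collin_comm12]; exact h k i j (by omega) (by omega))
    | (rw [collin_comm23, collin_comm12, collin_comm23]; exact h k j i (by omega) (by omega))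
    | omega

noncomputable def ext5 (x : PP F) : Fin 5 → PP F :=
  ![frame F 0, frame F 1, frame F 2, frame F 3, x]

lemma not_collin_of_det {v w u : Fin 3 → F} (hv : v ≠ 0) (hw : w ≠ 0) (hu : u ≠ 0)
    (h : (Matrix.of ![v, w, u]).det ≠ 0) :
    ¬ Collin F (Projectivization.mk F v hv) (Projectivization.mk F w hw)
      (Projectivization.mk F u hu) := by
  rw [collin_iff_det]; exact h

lemma genpos_ext {a b : F} (ha0 : a ≠ 0) (hb0 : b ≠ 0) (ha1 : a ≠ 1) (hb1 : b ≠ 1)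
    (hab : a ≠ b) :
    GenPos F (ext5 (Projectivization.mk F ![a,b,1] (nz3 2 one_ne_zero))) := by
  apply genPos_of_sorted
  intro i j k hij hjk
  fin_cases i <;> fin_cases j <;> fin_cases k <;>
    first
    | exact absurd hij (by decide)
    | exact absurd hjk (by decide)
    | (show ¬ Collin F (Projectivization.mk F _ _) (Projectivization.mk F _ _)
          (Projectivization.mk F _ _)
       refine not_collin_of_det _ _ _ ?_
       simp only [Matrix.det_fin_three, Matrix.of_apply, Matrix.cons_val', Matrix.cons_val_zero,
         Matrix.cons_val_one, Matrix.head_cons, Matrix.cons_val_two, Matrix.tail_cons,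
         Matrix.empty_val', Matrix.cons_val_fin_one, Matrix.head_fin_const]
       intro H
       first
       | exact one_ne_zero (by linear_combination H)
       | exact one_ne_zero (by linear_combination -H)
       | exact ha0 (by linear_combination H)
       | exact ha0 (by linear_combination -H)
       | exact hb0 (by linear_combination H)
       | exact hb0 (by linear_combination -H)
       | exact ha1 (by linear_combination H)
       | exact ha1 (by linear_combination -H)
       | exact hb1 (by linear_combination H)
       | exact hb1 (by linear_combination -H)
       | exact hab (by linear_combination H)
       | exact hab (by linear_combination -H))

lemma det_ne_of_not_collin {v w u : Fin 3 → F} {hv : v ≠ 0} {hw : w ≠ 0} {hu : u ≠ 0}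
    (h : ¬ Collin F (Projectivization.mk F v hv) (Projectivization.mk F w hw)
      (Projectivization.mk F u hu)) : (Matrix.of ![v, w, u]).det ≠ 0 :=
  fun hd => h ((collin_iff_det hv hw hu).mpr hd)

instance fin45Coe : Coe (Fin 4) (Fin 5) := ⟨Fin.castSucc⟩

lemma conds_of_genpos (x : PP F) (h : GenPos F (ext5 x)) :
    x.rep 2 ≠ 0 ∧ x.rep 0 ≠ 0 ∧ x.rep 1 ≠ 0 ∧ x.rep 0 ≠ x.rep 2 ∧ x.rep 1 ≠ x.rep 2 ∧
      x.rep 0 ≠ x.rep 1 := by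
  have get : ∀ i j : Fin 4, ∀ hij : (i : Fin 5) ≠ (j : Fin 5),
      ∀ hi4 : (i : Fin 5) ≠ 4, ∀ hj4 : (j : Fin 5) ≠ 4,
      ¬ Collin F (ext5 x i) (ext5 x j) x := by
    intro i j hij hi4 hj4
    have H := h i j 4 hij hi4 hj4
    rwa [show ext5 x 4 = x from rfl] at H
  have h01 := det_ne_of_not_collin (hv := nz3 0 one_ne_zero) (hw := nz3 1 one_ne_zero)
    (hu := x.rep_nonzero) (by
      have H := get 0 1 (by decide) (by decide) (by decide)
      rwa [show ext5 x (0:Fin 4) = Projectivization.mk F ![1,0,0] (nz3 0 one_ne_zero) from rfl,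
        show ext5 x (1:Fin 4) = Projectivization.mk F ![0,1,0] (nz3 1 one_ne_zero) from rfl,
        ← x.mk_rep] at H)
  have h02 := det_ne_of_not_collin (hv := nz3 0 one_ne_zero) (hw := nz3 2 one_ne_zero)
    (hu := x.rep_nonzero) (by
      have H := get 0 2 (by decide) (by decide) (by decide)
      rwa [show ext5 x (0:Fin 4) = Projectivization.mk F ![1,0,0] (nz3 0 one_ne_zero) from rfl,
        show ext5 x (2:Fin 4) = Projectivization.mk F ![0,0,1] (nz3 2 one_ne_zero) from rfl,
        ← x.mk_rep] at H)
  have h12 := det_ne_of_not_collin (hv := nz3 1 one_ne_zero) (hw := nz3 2 one_ne_zero)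
    (hu := x.rep_nonzero) (by
      have H := get 1 2 (by decide) (by decide) (by decide)
      rwa [show ext5 x (1:Fin 4) = Projectivization.mk F ![0,1,0] (nz3 1 one_ne_zero) from rfl,
        show ext5 x (2:Fin 4) = Projectivization.mk F ![0,0,1] (nz3 2 one_ne_zero) from rfl,
        ← x.mk_rep] at H)
  have h03 := det_ne_of_not_collin (hv := nz3 0 one_ne_zero) (hw := nz3 0 one_ne_zero)
    (hu := x.rep_nonzero) (by
      have H := get 0 3 (by decide) (by decide) (by decide)
      rwa [show ext5 x (0:Fin 4) = Projectivization.mk F ![1,0,0] (nz3 0 one_ne_zero) from rfl,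
        show ext5 x (3:Fin 4) = Projectivization.mk F ![1,1,1] (nz3 0 one_ne_zero) from rfl,
        ← x.mk_rep] at H)
  have h13 := det_ne_of_not_collin (hv := nz3 1 one_ne_zero) (hw := nz3 0 one_ne_zero)
    (hu := x.rep_nonzero) (by
      have H := get 1 3 (by decide) (by decide) (by decide)
      rwa [show ext5 x (1:Fin 4) = Projectivization.mk F ![0,1,0] (nz3 1 one_ne_zero) from rfl,
        show ext5 x (3:Fin 4) = Projectivization.mk F ![1,1,1] (nz3 0 one_ne_zero) from rfl,
        ← x.mk_rep] at H)
  have h23 := det_ne_of_not_collin (hv := nz3 2 one_ne_zero) (hw := nz3 0 one_ne_zero)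
    (hu := x.rep_nonzero) (by
      have H := get 2 3 (by decide) (by decide) (by decide)
      rwa [show ext5 x (2:Fin 4) = Projectivization.mk F ![0,0,1] (nz3 2 one_ne_zero) from rfl,
        show ext5 x (3:Fin 4) = Projectivization.mk F ![1,1,1] (nz3 0 one_ne_zero) from rfl,
        ← x.mk_rep] at H)
  simp only [Matrix.det_fin_three, Matrix.of_apply, Matrix.cons_val', Matrix.cons_val_zero,
    Matrix.cons_val_one, Matrix.head_cons, Matrix.cons_val_two, Matrix.tail_cons,
    Matrix.empty_val', Matrix.cons_val_fin_one, Matrix.head_fin_const] at h01 h02 h12 h03 h13 h23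
  refine ⟨?_, ?_, ?_, ?_, ?_, ?_⟩
  · intro hc; exact h01 (by linear_combination hc)
  · intro hc; exact h12 (by linear_combination hc)
  · intro hc; exact h02 (by linear_combination -hc)
  · intro hc; exact h13 (by linear_combination hc)
  · intro hc; exact h03 (by linear_combination -hc)
  · intro hc; exact h23 (by linear_combination -hc)

variable [Fintype F]

lemma card_goodpairs :
    Nat.card {p : F × F // p.1 ≠ 0 ∧ p.2 ≠ 0 ∧ p.1 ≠ 1 ∧ p.2 ≠ 1 ∧ p.1 ≠ p.2} =
      (Fintype.card F - 2) * (Fintype.card F - 3) := by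
  classical
  rw [Nat.card_eq_fintype_card,
    Fintype.card_congr (Equiv.subtypeProdEquivSigmaSubtype
      (fun a b : F => a ≠ 0 ∧ b ≠ 0 ∧ a ≠ 1 ∧ b ≠ 1 ∧ a ≠ b)),
    Fintype.card_sigma]
  have key : ∀ x : F, Fintype.card {y : F // x ≠ 0 ∧ y ≠ 0 ∧ x ≠ 1 ∧ y ≠ 1 ∧ x ≠ y} =
      if x ≠ 0 ∧ x ≠ 1 then Fintype.card F - 3 else 0 := by
    intro x
    by_cases h : x ≠ 0 ∧ x ≠ 1
    · rw [if_pos h, Fintype.card_subtype]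
      have : Finset.filter (fun y : F => x ≠ 0 ∧ y ≠ 0 ∧ x ≠ 1 ∧ y ≠ 1 ∧ x ≠ y) Finset.univ =
          Finset.univ \ {0, 1, x} := by
        ext y
        simp only [Finset.mem_filter, Finset.mem_univ, true_and, Finset.mem_sdiff,
          Finset.mem_insert, Finset.mem_singleton]
        constructor
        · rintro ⟨-, hy0, -, hy1, hxy⟩
          push_neg
          exact ⟨hy0, hy1, fun hc => hxy hc.symm⟩
        · intro hy
          push_neg at hy
          exact ⟨h.1, hy.1, h.2, hy.2.1, fun hc => hy.2.2 hc.symm⟩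
      rw [this, Finset.card_sdiff_of_subset (Finset.subset_univ _), Finset.card_univ]
      congr 1
      rw [Finset.card_insert_of_notMem (by
          simp only [Finset.mem_insert, Finset.mem_singleton]
          push_neg
          exact ⟨zero_ne_one, fun hc => h.1 hc.symm⟩),
        Finset.card_insert_of_notMem (by
          simp only [Finset.mem_singleton]
          exact fun hc => h.2 hc.symm),
        Finset.card_singleton]
    · rw [if_neg h]
      rw [Fintype.card_eq_zero_iff]
      exact ⟨fun y => absurd ⟨y.2.1, y.2.2.2.1⟩ h⟩
  rw [Finset.sum_congr rfl (fun x _ => key x), Finset.sum_ite, Finset.sum_const,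
    Finset.sum_const_zero, add_zero, smul_eq_mul]
  congr 1
  have : Finset.filter (fun x : F => x ≠ 0 ∧ x ≠ 1) Finset.univ = Finset.univ \ {0, 1} := by
    ext y
    simp only [Finset.mem_filter, Finset.mem_univ, true_and, Finset.mem_sdiff,
      Finset.mem_insert, Finset.mem_singleton]
    push_neg
    tauto
  rw [this, Finset.card_sdiff_of_subset (Finset.subset_univ _), Finset.card_univ,
    Finset.card_insert_of_notMem (by simp), Finset.card_singleton]

noncomputable def SEquivT :
    {x : PP F // GenPos F (ext5 x)} ≃
    {p : F × F // p.1 ≠ 0 ∧ p.2 ≠ 0 ∧ p.1 ≠ 1 ∧ p.2 ≠ 1 ∧ p.1 ≠ p.2} where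
  toFun x := ⟨(x.1.rep 0 / x.1.rep 2, x.1.rep 1 / x.1.rep 2), by
    obtain ⟨h2, h0, h1, h02, h12, h01⟩ := conds_of_genpos x.1 x.2
    refine ⟨div_ne_zero h0 h2, div_ne_zero h1 h2, ?_, ?_, ?_⟩
    · exact fun hcon => h02 ((div_eq_one_iff_eq h2).mp hcon)
    · exact fun hcon => h12 ((div_eq_one_iff_eq h2).mp hcon)
    · show ¬ x.1.rep 0 / x.1.rep 2 = x.1.rep 1 / x.1.rep 2
      intro hcon
      rw [div_eq_div_iff h2 h2] at hcon
      exact h01 (mul_right_cancel₀ h2 hcon)⟩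
  invFun p := ⟨Projectivization.mk F ![p.1.1, p.1.2, 1] (nz3 2 one_ne_zero),
    genpos_ext p.2.1 p.2.2.1 p.2.2.2.1 p.2.2.2.2.1 p.2.2.2.2.2⟩
  left_inv x := by
    obtain ⟨h2, h0, h1, h02, h12, h01⟩ := conds_of_genpos x.1 x.2
    apply Subtype.ext
    show Projectivization.mk F ![x.1.rep 0 / x.1.rep 2, x.1.rep 1 / x.1.rep 2, 1] _ = x.1
    conv_rhs => rw [← x.1.mk_rep]
    rw [Projectivization.mk_eq_mk_iff']
    refine ⟨(x.1.rep 2)⁻¹, ?_⟩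
    funext j
    fin_cases j <;> simp [h2] <;> field_simp
  right_inv p := by
    apply Subtype.ext
    obtain ⟨c, hc⟩ := Projectivization.exists_smul_eq_mk_rep F ![p.1.1, p.1.2, 1]
      (nz3 2 one_ne_zero)
    have e0 := congrFun hc 0
    have e1 := congrFun hc 1
    have e2 := congrFun hc 2
    simp only [Pi.smul_apply, Units.smul_def, smul_eq_mul, Matrix.cons_val_zero,
      Matrix.cons_val_one, Matrix.head_cons, Matrix.cons_val_two, Matrix.tail_cons,
      mul_one] at e0 e1 e2
    show (_, _) = p.1
    have hcne : (c : F) ≠ 0 := c.ne_zero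
    rw [Prod.ext_iff]
    constructor
    · show _ / _ = p.1.1
      rw [← e0, ← e2]
      field_simp
    · show _ / _ = p.1.2
      rw [← e1, ← e2]
      field_simp

lemma glAct_one (x : PP F) : glAct F 1 x = x :=
  glAct_scalar 1 1 (by rw [Units.val_one, Units.val_one, one_smul]) x

lemma exists_gl (P : Fin 5 → PP F) (hP : GenPos F P) :
    ∃ g : GL (Fin 3) F, ∀ i : Fin 4, glAct F g (frame F i) = P i.castSucc := by
  set r : Fin 5 → (Fin 3 → F) := fun i => (P i).rep with hr
  have hind : (Matrix.of ![r 0, r 1, r 2]).det ≠ 0 := by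
    apply det_ne_of_not_collin (hv := (P 0).rep_nonzero) (hw := (P 1).rep_nonzero)
      (hu := (P 2).rep_nonzero)
    have H := hP 0 1 2 (by decide) (by decide) (by decide)
    rwa [← (P 0).mk_rep, ← (P 1).mk_rep, ← (P 2).mk_rep] at H
  set B : Matrix (Fin 3) (Fin 3) F := (Matrix.of ![r 0, r 1, r 2])ᵀ with hBdef
  have hB : B.det ≠ 0 := by rw [hBdef, Matrix.det_transpose]; exact hind
  set c : Fin 3 → F := B⁻¹ *ᵥ r 3 with hcdef
  have hBc : B *ᵥ c = r 3 := by
    rw [hcdef, Matrix.mulVec_mulVec, Matrix.mul_nonsing_inv _ (isUnit_iff_ne_zero.mpr hB),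
      Matrix.one_mulVec]
  have hB0 : ∀ j : Fin 3, B j 0 = r 0 j := fun j => rfl
  have hB1 : ∀ j : Fin 3, B j 1 = r 1 j := fun j => rfl
  have hB2 : ∀ j : Fin 3, B j 2 = r 2 j := fun j => rfl
  have hsum : ∀ j, r 3 j = c 0 * r 0 j + c 1 * r 1 j + c 2 * r 2 j := by
    intro j
    have h := congrFun hBc j
    rw [mulVec3] at h
    rw [← h, hB0, hB1, hB2]
    ring
  have hcne : ∀ k : Fin 3, c k ≠ 0 := by
    intro k hk
    fin_cases k
    · have H := hP 1 2 3 (by decide) (by decide) (by decide)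
      rw [← (P 1).mk_rep, ← (P 2).mk_rep, ← (P 3).mk_rep, collin_iff_mk] at H
      apply H
      intro hli
      rw [Fintype.linearIndependent_iff] at hli
      have := hli ![c 1, c 2, -1] (by
        funext j
        simp only [Fin.sum_univ_three, Matrix.cons_val_zero, Matrix.cons_val_one,
          Matrix.head_cons, Matrix.cons_val_two, Matrix.tail_cons, Pi.add_apply,
          Pi.smul_apply, smul_eq_mul, Pi.zero_apply]
        rw [show Projectivization.rep (P 1) = r 1 from rfl,
          show Projectivization.rep (P 2) = r 2 from rfl,
          show Projectivization.rep (P 3) = r 3 from rfl]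
        have := hsum j
        rw [show c 0 = 0 from hk] at this
        linear_combination -this) 2
      simp at this
    · have H := hP 0 2 3 (by decide) (by decide) (by decide)
      rw [← (P 0).mk_rep, ← (P 2).mk_rep, ← (P 3).mk_rep, collin_iff_mk] at H
      apply H
      intro hli
      rw [Fintype.linearIndependent_iff] at hli
      have := hli ![c 0, c 2, -1] (by
        funext j
        simp only [Fin.sum_univ_three, Matrix.cons_val_zero, Matrix.cons_val_one,
          Matrix.head_cons, Matrix.cons_val_two, Matrix.tail_cons, Pi.add_apply,
          Pi.smul_apply, smul_eq_mul, Pi.zero_apply]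
        rw [show Projectivization.rep (P 0) = r 0 from rfl,
          show Projectivization.rep (P 2) = r 2 from rfl,
          show Projectivization.rep (P 3) = r 3 from rfl]
        have := hsum j
        rw [show c 1 = 0 from hk] at this
        linear_combination -this) 2
      simp at this
    · have H := hP 0 1 3 (by decide) (by decide) (by decide)
      rw [← (P 0).mk_rep, ← (P 1).mk_rep, ← (P 3).mk_rep, collin_iff_mk] at H
      apply H
      intro hli
      rw [Fintype.linearIndependent_iff] at hli
      have := hli ![c 0, c 1, -1] (by
        funext j
        simp only [Fin.sum_univ_three, Matrix.cons_val_zero, Matrix.cons_val_one,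
          Matrix.head_cons, Matrix.cons_val_two, Matrix.tail_cons, Pi.add_apply,
          Pi.smul_apply, smul_eq_mul, Pi.zero_apply]
        rw [show Projectivization.rep (P 0) = r 0 from rfl,
          show Projectivization.rep (P 1) = r 1 from rfl,
          show Projectivization.rep (P 3) = r 3 from rfl]
        have := hsum j
        rw [show c 2 = 0 from hk] at this
        linear_combination -this) 2
      simp at this
  set M : Matrix (Fin 3) (Fin 3) F := B * Matrix.diagonal c with hMdef
  have hM0 : ∀ j : Fin 3, M j 0 = r 0 j * c 0 := by
    intro j; rw [hMdef, Matrix.mul_diagonal, hB0]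
  have hM1 : ∀ j : Fin 3, M j 1 = r 1 j * c 1 := by
    intro j; rw [hMdef, Matrix.mul_diagonal, hB1]
  have hM2 : ∀ j : Fin 3, M j 2 = r 2 j * c 2 := by
    intro j; rw [hMdef, Matrix.mul_diagonal, hB2]
  have hMdet : M.det ≠ 0 := by
    rw [hMdef, Matrix.det_mul, Matrix.det_diagonal, Fin.prod_univ_three]
    exact mul_ne_zero hB (mul_ne_zero (mul_ne_zero (hcne 0) (hcne 1)) (hcne 2))
  refine ⟨Matrix.GeneralLinearGroup.mkOfDetNeZero M hMdet, ?_⟩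
  have hgval : (↑(Matrix.GeneralLinearGroup.mkOfDetNeZero M hMdet) :
      Matrix (Fin 3) (Fin 3) F) = M := rfl
  intro i
  fin_cases i
  · show glAct F (Matrix.GeneralLinearGroup.mkOfDetNeZero M hMdet) (frame F 0) = P 0
    rw [show frame F 0 = Projectivization.mk F ![1,0,0] (nz3 0 one_ne_zero) from rfl, glAct_mk]
    conv_rhs => rw [← (P 0).mk_rep]
    rw [Projectivization.mk_eq_mk_iff]
    refine ⟨Units.mk0 (c 0) (hcne 0), ?_⟩
    funext j
    rw [hgval, mulVec3, hM0, hM1, hM2]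
    rw [show Projectivization.rep (P 0) = r 0 from rfl]
    simp only [Units.smul_def, Pi.smul_apply, smul_eq_mul, Units.val_mk0,
      Matrix.cons_val_zero, Matrix.cons_val_one, Matrix.head_cons, Matrix.cons_val_two,
      Matrix.tail_cons]
    ring
  · show glAct F (Matrix.GeneralLinearGroup.mkOfDetNeZero M hMdet) (frame F 1) = P 1
    rw [show frame F 1 = Projectivization.mk F ![0,1,0] (nz3 1 one_ne_zero) from rfl, glAct_mk]
    conv_rhs => rw [← (P 1).mk_rep]
    rw [Projectivization.mk_eq_mk_iff]
    refine ⟨Units.mk0 (c 1) (hcne 1), ?_⟩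
    funext j
    rw [hgval, mulVec3, hM0, hM1, hM2]
    rw [show Projectivization.rep (P 1) = r 1 from rfl]
    simp only [Units.smul_def, Pi.smul_apply, smul_eq_mul, Units.val_mk0,
      Matrix.cons_val_zero, Matrix.cons_val_one, Matrix.head_cons, Matrix.cons_val_two,
      Matrix.tail_cons]
    ring
  · show glAct F (Matrix.GeneralLinearGroup.mkOfDetNeZero M hMdet) (frame F 2) = P 2
    rw [show frame F 2 = Projectivization.mk F ![0,0,1] (nz3 2 one_ne_zero) from rfl, glAct_mk]
    conv_rhs => rw [← (P 2).mk_rep]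
    rw [Projectivization.mk_eq_mk_iff]
    refine ⟨Units.mk0 (c 2) (hcne 2), ?_⟩
    funext j
    rw [hgval, mulVec3, hM0, hM1, hM2]
    rw [show Projectivization.rep (P 2) = r 2 from rfl]
    simp only [Units.smul_def, Pi.smul_apply, smul_eq_mul, Units.val_mk0,
      Matrix.cons_val_zero, Matrix.cons_val_one, Matrix.head_cons, Matrix.cons_val_two,
      Matrix.tail_cons]
    ring
  · show glAct F (Matrix.GeneralLinearGroup.mkOfDetNeZero M hMdet) (frame F 3) = P 3
    rw [show frame F 3 = Projectivization.mk F ![1,1,1] (nz3 0 one_ne_zero) from rfl, glAct_mk]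
    conv_rhs => rw [← (P 3).mk_rep]
    rw [Projectivization.mk_eq_mk_iff]
    refine ⟨1, ?_⟩
    funext j
    rw [hgval, mulVec3, hM0, hM1, hM2]
    rw [show Projectivization.rep (P 3) = r 3 from rfl]
    simp only [Units.smul_def, Pi.smul_apply, smul_eq_mul, Units.val_one,
      Matrix.cons_val_zero, Matrix.cons_val_one, Matrix.head_cons, Matrix.cons_val_two,
      Matrix.tail_cons, one_mul]
    rw [hsum j]
    ring


end Aux

/-- Two general-position quintuples are projectively equivalent if some element of
`GL_3(F)` (equivalently of `PGL_3(F)`) takes one to the other. -/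
def ProjEquiv (F : Type) [Field F] (P Q : {P : Fin 5 → PP F // GenPos F P}) : Prop :=
  ∃ g : GL (Fin 3) F, ∀ i, glAct F g (P.1 i) = Q.1 i


section Aux2
variable {F : Type} [Field F] [Fintype F]

lemma projEquiv_equivalence : Equivalence (ProjEquiv F) where
  refl P := ⟨1, fun i => glAct_one _⟩
  symm := by
    rintro P Q ⟨g, hg⟩
    exact ⟨g⁻¹, fun i => by rw [← hg i, glAct_glAct, inv_mul_cancel, glAct_one]⟩
  trans := by
    rintro P Q R ⟨g, hg⟩ ⟨g', hg'⟩
    exact ⟨g' * g, fun i => by rw [← glAct_glAct, hg i, hg' i]⟩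

end Aux2

/-- The number of `PGL_3(F_q)`-orbits of ordered quintuples of points of `P^2(F_q)` in
general position equals `q^2 - 5q + 6`. -/
theorem statement2 (F : Type) [Field F] [Fintype F] (hq : 3 < Fintype.card F) :
    (Nat.card (Quot (ProjEquiv F)) : ℤ) =
      (Fintype.card F : ℤ)^2 - 5 * Fintype.card F + 6 := by
  classical
  classical
  have hbij : Function.Bijective (fun x : {x : PP F // GenPos F (ext5 x)} =>
      Quot.mk (ProjEquiv F) ⟨ext5 x.1, x.2⟩) := by
    constructor
    · intro x y hxy
      rw [Quot.eq] at hxy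
      replace hxy := ((projEquiv_equivalence (F := F)).eqvGen_iff).mp hxy
      obtain ⟨g, hg⟩ := hxy
      have hfix : ∀ i : Fin 4, glAct F g (frame F i) = frame F i := by
        intro i
        fin_cases i
        · exact hg 0
        · exact hg 1
        · exact hg 2
        · exact hg 3
      obtain ⟨d, hd⟩ := fix_frame_scalar g hfix
      apply Subtype.ext
      have h4 : glAct F g x.1 = y.1 := hg 4
      exact (glAct_scalar g d hd x.1).symm.trans h4
    · intro q
      induction q using Quot.ind with
      | _ P =>
        obtain ⟨g, hg⟩ := exists_gl P.1 P.2
        set x : PP F := glAct F g⁻¹ (P.1 4) with hx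
        have key : ∀ i : Fin 5, glAct F g (ext5 x i) = P.1 i := by
          intro i
          fin_cases i
          · exact hg 0
          · exact hg 1
          · exact hg 2
          · exact hg 3
          · show glAct F g (glAct F g⁻¹ (P.1 4)) = P.1 4
            rw [glAct_glAct, mul_inv_cancel, glAct_one]
        have hxgen : GenPos F (ext5 x) := by
          intro i j k hij hik hjk hcol
          exact P.2 i j k hij hik hjk (by
            rw [← key i, ← key j, ← key k]
            exact (collin_glAct g _ _ _).mpr hcol)
        exact ⟨⟨x, hxgen⟩, Quot.sound ⟨g, key⟩⟩
  have hcard : Nat.card (Quot (ProjEquiv F)) =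
      (Fintype.card F - 2) * (Fintype.card F - 3) := by
    rw [← Nat.card_eq_of_bijective _ hbij, Nat.card_congr (SEquivT (F := F)),
      card_goodpairs]
  rw [hcard]
  rw [Nat.cast_mul, Nat.cast_sub (by omega), Nat.cast_sub (by omega)]
  push_cast
  ring
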